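/- arXiv:2602.09734 — 3 statements merged into one kernel-verified Lean document; each statement's English description precedes it below -/
import Mathlib

section
/- Let f be a banded Toeplitz symbol of bandwidth m with real coefficients, and suppose Z(f) is spanned by a polar curve with the non-confluence assumption in force. Let β : [−π, π] → ℝ be a continuously differentiable function such that e^{i(α + iβ(α))} ∈ Z(f) for every α ∈ [−π, π] (so that λ(α) := f(e^{i(α + iβ(α))}) is real-valued). Then the function α ↦ λ(α) is strictly monotone on the interval (−π, 0) and strictly monotone on the interval (0, π). -/
/-!
STATEMENT 3: Let f be a banded Toeplitz symbol of bandwidth m with real coefficients,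
with Z(f) spanned by a polar curve and the non-confluence assumption in force.  Let
β : [−π, π] → ℝ be C¹ with e^{i(α + iβ(α))} ∈ Z(f) for all α ∈ [−π, π] (so that
λ(α) := f(e^{i(α + iβ(α))}) is real-valued).  Then α ↦ λ(α) is strictly monotone
on (−π, 0) and strictly monotone on (0, π).
-/

open Complex Polynomial
open scoped Real

/-- The banded Toeplitz symbol `f(z) = ∑_{k=-m}^m a_k z^{-k}`. -/
noncomputable def symb (m : ℕ) (a : ℤ → ℂ) (z : ℂ) : ℂ :=
  ∑ k ∈ Finset.Icc (-(m : ℤ)) (m : ℤ), a k * z ^ (-k)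

/-- The polynomial `z^m (f(z) - λ)` of degree `2m`. -/
noncomputable def symbPoly (m : ℕ) (a : ℤ → ℂ) (lam : ℂ) : Polynomial ℂ :=
  (∑ k ∈ Finset.Icc (-(m : ℤ)) (m : ℤ), Polynomial.C (a k) * Polynomial.X ^ ((m : ℤ) - k).toNat)
    - Polynomial.C lam * Polynomial.X ^ m

/-- `zs` enumerates the roots of `P` (with multiplicity) in order of increasing modulus. -/
def sortedRootEnum (m : ℕ) (P : Polynomial ℂ) (zs : Fin (2 * m) → ℂ) : Prop :=
  P.roots = Multiset.map zs Finset.univ.val ∧ Monotone fun i => ‖zs i‖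

/-- `Z(f)`: the set of middle roots `z_m(λ), z_{m+1}(λ)` over real `λ` with
`|z_m(λ)| = |z_{m+1}(λ)|`. -/
noncomputable def Zset (m : ℕ) (hm : 0 < m) (a : ℤ → ℂ) : Set ℂ :=
  {z : ℂ | ∃ lam : ℝ, ∃ zs : Fin (2 * m) → ℂ, sortedRootEnum m (symbPoly m a (lam : ℂ)) zs ∧
    ‖zs ⟨m - 1, by omega⟩‖ = ‖zs ⟨m, by omega⟩‖ ∧
    (z = zs ⟨m - 1, by omega⟩ ∨ z = zs ⟨m, by omega⟩)}

/-- The polar curve `p(e^{iθ}) = r(θ) e^{iθ}`. -/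
noncomputable def polarCurve (r : ℝ → ℝ) (θ : ℝ) : ℂ :=
  (r θ : ℂ) * Complex.exp (θ * Complex.I)

lemma Zset_symb_real (m : ℕ) (hm : 0 < m) (a : ℤ → ℂ) {z : ℂ} (hz0 : z ≠ 0)
    (hz : z ∈ Zset m hm a) : ∃ lam : ℝ, symb m a z = (lam : ℂ) := by
  obtain ⟨lam, zs, ⟨hroots, -⟩, -, hz'⟩ := hz
  have hmem : z ∈ (symbPoly m a (lam : ℂ)).roots := by
    rw [hroots]
    rcases hz' with h | h <;>
      · rw [h]; exact Multiset.mem_map.2 ⟨_, by simp, rfl⟩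
  have heval : (symbPoly m a (lam : ℂ)).eval z = 0 := (Polynomial.mem_roots'.1 hmem).2
  refine ⟨lam, ?_⟩
  have hzm : z ^ m ≠ 0 := pow_ne_zero _ hz0
  have key : z ^ m * (symb m a z - (lam : ℂ)) = 0 := by
    rw [← heval]
    simp only [symbPoly, symb, eval_sub, eval_mul, eval_C, eval_pow, eval_X, eval_finset_sum,
      mul_sub, Finset.mul_sum]
    congr 1
    on_goal 2 => ring
    refine Finset.sum_congr rfl fun k hk => ?_
    have hk' : 0 ≤ (m : ℤ) - k := by
      have := (Finset.mem_Icc.1 hk).2; omega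
    have : z ^ ((m : ℤ) - k).toNat = z ^ m * z ^ (-k) := by
      rw [← zpow_natCast z (((m : ℤ) - k).toNat), Int.toNat_of_nonneg hk',
        ← zpow_natCast z m, ← zpow_add₀ hz0]
      ring_nf
    rw [this]; ring
  rcases mul_eq_zero.1 key with h | h
  · exact absurd h hzm
  · linear_combination h
noncomputable def symbD (m : ℕ) (a : ℤ → ℂ) (z : ℂ) : ℂ :=
  ∑ k ∈ Finset.Icc (-(m : ℤ)) (m : ℤ), a k * ((-k : ℂ) * z ^ (-k - 1))

lemma hasDerivAt_symb (m : ℕ) (a : ℤ → ℂ) {z : ℂ} (hz : z ≠ 0) :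
    HasDerivAt (symb m a) (symbD m a z) z := by
  unfold symb symbD
  apply HasDerivAt.fun_sum
  intro k _
  simpa using ((hasDerivAt_zpow (-k) z (Or.inl hz)).const_mul (a k))

lemma continuousOn_symbD (m : ℕ) (a : ℤ → ℂ) :
    ContinuousOn (symbD m a) {z : ℂ | z ≠ 0} := by
  unfold symbD
  refine continuousOn_finset_sum _ fun k _ => ?_
  exact continuousOn_const.mul (continuousOn_const.mul
    (fun z hz => (continuousAt_zpow₀ z _ (Or.inl hz)).continuousWithinAt))

-- the quasimomentum curve
lemma hasDerivAt_w (β : ℝ → ℝ) (α : ℝ) (hβ : DifferentiableAt ℝ β α) :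
    HasDerivAt (fun x : ℝ => Complex.I * ((x : ℂ) + Complex.I * (β x : ℂ)))
      (Complex.I * (1 + Complex.I * ((deriv β α : ℝ) : ℂ))) α := by
  have h1 : HasDerivAt (fun x : ℝ => ((x : ℝ) : ℂ)) 1 α := by
    simpa using (hasDerivAt_id α).ofReal_comp
  have h2 : HasDerivAt (fun x : ℝ => ((β x : ℝ) : ℂ)) ((deriv β α : ℝ) : ℂ) α :=
    (hβ.hasDerivAt).ofReal_comp
  exact (h1.add (h2.const_mul Complex.I)).const_mul Complex.I

lemma exp_w_im (β : ℝ → ℝ) (α : ℝ) :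
    (Complex.exp (Complex.I * ((α : ℂ) + Complex.I * (β α : ℂ)))).im
      = Real.exp (-(β α)) * Real.sin α := by
  rw [Complex.exp_im]
  congr 1 <;> simp [Complex.mul_re, Complex.mul_im]

lemma key_mono (m : ℕ) (hm : 0 < m) (a : ℤ → ℂ)
    (hnc1 : ∀ z ∈ Zset m hm a, z.im ≠ 0 → deriv (symb m a) z ≠ 0)
    (β : ℝ → ℝ) (hβ : ContDiffOn ℝ 1 β (Set.Icc (-Real.pi) Real.pi))
    (hmem : ∀ α ∈ Set.Icc (-Real.pi) Real.pi,
      Complex.exp (Complex.I * ((α : ℂ) + Complex.I * (β α : ℂ))) ∈ Zset m hm a)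
    (l u : ℝ) (hsub : Set.Ioo l u ⊆ Set.Ioo (-Real.pi) Real.pi)
    (hsin : ∀ α ∈ Set.Ioo l u, Real.sin α ≠ 0) :
    StrictMonoOn
        (fun α : ℝ => (symb m a (Complex.exp (Complex.I * ((α : ℂ) + Complex.I * (β α : ℂ))))).re)
        (Set.Ioo l u) ∨
      StrictAntiOn
        (fun α : ℝ => (symb m a (Complex.exp (Complex.I * ((α : ℂ) + Complex.I * (β α : ℂ))))).re)
        (Set.Ioo l u) := by
  have hπ : (0 : ℝ) < Real.pi := Real.pi_pos
  set w : ℝ → ℂ := fun x => Complex.I * ((x : ℂ) + Complex.I * (β x : ℂ)) with hw_def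
  set z : ℝ → ℂ := fun x => Complex.exp (w x) with hz_def
  set g : ℝ → ℝ := fun x => (symb m a (z x)).re with hg_def
  set h : ℝ → ℝ := fun x =>
    (symbD m a (z x) * (z x * (Complex.I * (1 + Complex.I * ((deriv β x : ℝ) : ℂ))))).re
    with hh_def
  have hz0 : ∀ x : ℝ, z x ≠ 0 := fun x => Complex.exp_ne_zero _
  have hIoosub : Set.Ioo l u ⊆ Set.Icc (-Real.pi) Real.pi := fun x hx =>
    ⟨(hsub hx).1.le, (hsub hx).2.le⟩
  -- the pointwise derivative facts
  have main : ∀ x ∈ Set.Ioo l u, HasDerivAt g (h x) x ∧ h x ≠ 0 := by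
    intro x hx
    have hxI := hsub hx
    have hnh : Set.Icc (-Real.pi) Real.pi ∈ nhds x := Icc_mem_nhds hxI.1 hxI.2
    have hβdiff : DifferentiableAt ℝ β x :=
      ((hβ.differentiableOn one_ne_zero) x (hIoosub hx)).differentiableAt hnh
    have hw : HasDerivAt w (Complex.I * (1 + Complex.I * ((deriv β x : ℝ) : ℂ))) x :=
      hasDerivAt_w β x hβdiff
    have hz' : HasDerivAt z (z x * (Complex.I * (1 + Complex.I * ((deriv β x : ℝ) : ℂ)))) x :=
      hw.cexp
    have him : (z x).im ≠ 0 := by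
      rw [hz_def]
      simp only [hw_def]
      rw [exp_w_im β x]
      exact mul_ne_zero (Real.exp_pos _).ne' (hsin x hx)
    have hmemZ : z x ∈ Zset m hm a := hmem x (hIoosub hx)
    have hds : HasDerivAt (symb m a) (symbD m a (z x)) (z x) := hasDerivAt_symb m a (hz0 x)
    have hsymbD_ne : symbD m a (z x) ≠ 0 := hds.deriv ▸ hnc1 _ hmemZ him
    have hF : HasDerivAt (fun y => symb m a (z y))
        (symbD m a (z x) * (z x * (Complex.I * (1 + Complex.I * ((deriv β x : ℝ) : ℂ))))) x := by
      have := hds.scomp (x := x) hz'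
      simpa [Function.comp_def, smul_eq_mul, mul_comm] using this
    set F' : ℂ := symbD m a (z x) * (z x * (Complex.I * (1 + Complex.I * ((deriv β x : ℝ) : ℂ))))
      with hF'_def
    have hF'ne : F' ≠ 0 := by
      have h1I : (1 + Complex.I * ((deriv β x : ℝ) : ℂ)) ≠ 0 := by
        intro hcon
        have := congrArg Complex.re hcon
        simp [Complex.add_re, Complex.mul_re] at this
      exact mul_ne_zero hsymbD_ne (mul_ne_zero (hz0 x)
        (mul_ne_zero Complex.I_ne_zero h1I))
    have hIm0 : F'.im = 0 := by
      have hev : (fun y => (symb m a (z y)).im) =ᶠ[nhds x] fun _ => (0 : ℝ) := by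
        filter_upwards [hnh] with y hy
        obtain ⟨lam, hlam⟩ := Zset_symb_real m hm a (hz0 y) (hmem y hy)
        simp only [hz_def, hw_def] at hlam ⊢
        rw [hlam, Complex.ofReal_im]
      have him' : HasDerivAt (fun y => (symb m a (z y)).im) F'.im x := by
        have := Complex.imCLM.hasFDerivAt.comp_hasDerivAt x hF
        simpa [Function.comp_def] using this
      have hconst : HasDerivAt (fun _ : ℝ => (0 : ℝ)) F'.im x :=
        him'.congr_of_eventuallyEq hev.symm
      have := hconst.unique (hasDerivAt_const x (0 : ℝ))
      exact this
    have hgd : HasDerivAt g F'.re x := by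
      have := Complex.reCLM.hasFDerivAt.comp_hasDerivAt x hF
      simpa [hg_def, Function.comp_def] using this
    refine ⟨hgd, ?_⟩
    intro hre0
    exact hF'ne (Complex.ext hre0 hIm0)
  -- continuity of h
  have hβcont : ContinuousOn β (Set.Icc (-Real.pi) Real.pi) := hβ.continuousOn
  have hβ'cont : ContinuousOn (deriv β) (Set.Ioo l u) := by
    have h1 : ContinuousOn (derivWithin β (Set.Icc (-Real.pi) Real.pi))
        (Set.Icc (-Real.pi) Real.pi) :=
      hβ.continuousOn_derivWithin (uniqueDiffOn_Icc (by linarith)) le_rfl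
    exact (h1.mono hIoosub).congr fun x hx =>
      (derivWithin_of_mem_nhds (Icc_mem_nhds (hsub hx).1 (hsub hx).2)).symm
  have hzcont : ContinuousOn z (Set.Ioo l u) := by
    apply Complex.continuous_exp.comp_continuousOn
    exact continuousOn_const.mul ((Complex.continuous_ofReal.continuousOn).add
      (continuousOn_const.mul (Complex.continuous_ofReal.comp_continuousOn
        (hβcont.mono hIoosub))))
  have hhcont : ContinuousOn h (Set.Ioo l u) := by
    apply Complex.continuous_re.comp_continuousOn
    refine ContinuousOn.mul ?_ (hzcont.mul (continuousOn_const.mul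
      (continuousOn_const.add (continuousOn_const.mul
        (Complex.continuous_ofReal.comp_continuousOn hβ'cont)))))
    exact (continuousOn_symbD m a).comp hzcont fun x _ => hz0 x
  -- conclude by sign dichotomy
  have hderiv : ∀ x ∈ Set.Ioo l u, deriv g x = h x := fun x hx => ((main x hx).1).deriv
  have hgcont : ContinuousOn g (Set.Ioo l u) := fun x hx =>
    ((main x hx).1).continuousAt.continuousWithinAt
  by_cases hp : ∀ x ∈ Set.Ioo l u, 0 < h x
  · left
    apply strictMonoOn_of_deriv_pos (convex_Ioo l u) hgcont
    intro x hx
    rw [interior_Ioo] at hx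
    rw [hderiv x hx]
    exact hp x hx
  · right
    push_neg at hp
    obtain ⟨x₀, hx₀, hx₀'⟩ := hp
    have h0 : h x₀ < 0 := lt_of_le_of_ne hx₀' (main x₀ hx₀).2
    have hneg : ∀ x ∈ Set.Ioo l u, h x < 0 := by
      intro x hx
      rcases lt_or_gt_of_ne ((main x hx).2) with hlt | hgt
      · exact hlt
      exfalso
      have hsubu : Set.uIcc x₀ x ⊆ Set.Ioo l u :=
        (Set.ordConnected_Ioo).uIcc_subset hx₀ hx
      have hiv := intermediate_value_uIcc (hhcont.mono hsubu)
      have h0mem : (0 : ℝ) ∈ Set.uIcc (h x₀) (h x) := Set.mem_uIcc.2 (Or.inl ⟨h0.le, hgt.le⟩)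
      obtain ⟨y, hy, hy0⟩ := hiv h0mem
      exact (main y (hsubu hy)).2 hy0
    apply strictAntiOn_of_deriv_neg (convex_Ioo l u) hgcont
    intro x hx
    rw [interior_Ioo] at hx
    rw [hderiv x hx]
    exact hneg x hx

theorem band_function_strictly_monotone
    (m : ℕ) (hm : 0 < m) (a : ℤ → ℂ)
    -- real coefficients
    (hreal : ∀ k, (a k).im = 0)
    -- bandwidth exactly m
    (ham : a (m : ℤ) ≠ 0) (hamneg : a (-(m : ℤ)) ≠ 0)
    -- the polar curve spanning Z(f)
    (r : ℝ → ℝ)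
    (hrc : ContinuousOn r (Set.Icc (-Real.pi) Real.pi))
    (hrpos : ∀ θ ∈ Set.Icc (-Real.pi) Real.pi, 0 < r θ)
    (hrclosed : r (-Real.pi) = r Real.pi)
    (hspan : Zset m hm a = polarCurve r '' Set.Icc (-Real.pi) Real.pi)
    -- non-confluence assumption
    (hnc1 : ∀ z ∈ Zset m hm a, z.im ≠ 0 → deriv (symb m a) z ≠ 0)
    (hnc2 : ∀ z ∈ Zset m hm a, z.im = 0 → deriv (deriv (symb m a)) z ≠ 0)
    -- the continuously differentiable imaginary part β of the quasimomentum
    (β : ℝ → ℝ) (hβ : ContDiffOn ℝ 1 β (Set.Icc (-Real.pi) Real.pi))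
    (hmem : ∀ α ∈ Set.Icc (-Real.pi) Real.pi,
      Complex.exp (Complex.I * ((α : ℂ) + Complex.I * (β α : ℂ))) ∈ Zset m hm a) :
    (StrictMonoOn
        (fun α : ℝ => (symb m a (Complex.exp (Complex.I * ((α : ℂ) + Complex.I * (β α : ℂ))))).re)
        (Set.Ioo (-Real.pi) 0) ∨
      StrictAntiOn
        (fun α : ℝ => (symb m a (Complex.exp (Complex.I * ((α : ℂ) + Complex.I * (β α : ℂ))))).re)
        (Set.Ioo (-Real.pi) 0)) ∧
    (StrictMonoOn
        (fun α : ℝ => (symb m a (Complex.exp (Complex.I * ((α : ℂ) + Complex.I * (β α : ℂ))))).re)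
        (Set.Ioo 0 Real.pi) ∨
      StrictAntiOn
        (fun α : ℝ => (symb m a (Complex.exp (Complex.I * ((α : ℂ) + Complex.I * (β α : ℂ))))).re)
        (Set.Ioo 0 Real.pi)) := by
  constructor
  · exact key_mono m hm a hnc1 β hβ hmem (-Real.pi) 0
      (fun x hx => ⟨hx.1, lt_trans hx.2 Real.pi_pos⟩)
      (fun x hx => (Real.sin_neg_of_neg_of_neg_pi_lt hx.2 hx.1).ne)
  · exact key_mono m hm a hnc1 β hβ hmem 0 Real.pi
      (fun x hx => ⟨lt_trans (neg_lt_zero.2 Real.pi_pos) hx.1, hx.2⟩)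
      (fun x hx => (Real.sin_pos_of_pos_of_lt_pi hx.1 hx.2).ne')
end

section
/- Let (A_n) and (B_n) be sequences of matrices, A_n and B_n of size n×n with complex entries, such that sup_n ‖A_n‖_op < ∞ and sup_n ‖B_n‖_op < ∞, and such that (1/n)‖A_n − B_n‖_F² → 0 as n → ∞, where ‖·‖_F is the Frobenius norm. Then for every s ∈ ℕ, (1/n)(tr(A_n^s) − tr(B_n^s)) → 0 as n → ∞; equivalently, denoting by a_{n,1}, …, a_{n,n} and b_{n,1}, …, b_{n,n} the eigenvalues of A_n and B_n (with multiplicity), the normalized power sums satisfy (1/n)∑_{k=1}^n a_{n,k}^s − (1/n)∑_{k=1}^n b_{n,k}^s → 0, so whenever one of the limits lim_n (1/n)∑_k a_{n,k}^s, lim_n (1/n)∑_k b_{n,k}^s exists, both exist and are equal. -/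
/-!
STATEMENT 8: Let (A_n), (B_n) be sequences of n×n complex matrices with uniformly bounded
operator norms and (1/n)‖A_n − B_n‖_F² → 0.  Then for every s ∈ ℕ,
(1/n)(tr(A_n^s) − tr(B_n^s)) → 0; consequently, whenever one of the normalized trace
(power-sum) limits exists, both exist and are equal.
-/

open Filter

open Finset in
private lemma aux_col (n : ℕ) (M : Matrix (Fin n) (Fin n) ℂ) (j : Fin n) :
    ∑ i, ‖M i j‖^2 ≤ ‖Matrix.toEuclideanCLM (𝕜 := ℂ) M‖^2 := by
  set T := Matrix.toEuclideanCLM (𝕜 := ℂ) M with hT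
  have h1 : ∀ i, (T (EuclideanSpace.single j 1)) i = M i j := by
    intro i
    rw [← EuclideanSpace.toLp_single (𝕜 := ℂ), hT, Matrix.toEuclideanCLM_toLp]
    simp [Matrix.mulVec_single, Matrix.toLin'_apply]
  have h2 : ‖T (EuclideanSpace.single j 1)‖^2 = ∑ i, ‖(T (EuclideanSpace.single j 1)) i‖^2 := by
    rw [EuclideanSpace.norm_eq, Real.sq_sqrt]; positivity
  calc ∑ i, ‖M i j‖^2 = ‖T (EuclideanSpace.single j 1)‖^2 := by rw [h2]; simp [h1]
    _ ≤ (‖T‖ * ‖EuclideanSpace.single j (1:ℂ)‖)^2 := by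
        gcongr; exact T.le_opNorm _
    _ = ‖T‖^2 := by rw [EuclideanSpace.norm_single, norm_one, mul_one]

private lemma aux_frob (n : ℕ) (M : Matrix (Fin n) (Fin n) ℂ) :
    ∑ i, ∑ j, ‖M i j‖^2 ≤ n * ‖Matrix.toEuclideanCLM (𝕜 := ℂ) M‖^2 := by
  rw [Finset.sum_comm]
  calc ∑ j, ∑ i, ‖M i j‖^2 ≤ ∑ _j : Fin n, ‖Matrix.toEuclideanCLM (𝕜 := ℂ) M‖^2 :=
        Finset.sum_le_sum fun j _ => aux_col n M j
    _ = n * ‖Matrix.toEuclideanCLM (𝕜 := ℂ) M‖^2 := by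
        rw [Finset.sum_const, Finset.card_univ, Fintype.card_fin, nsmul_eq_mul]

private lemma aux_trace_cs (n : ℕ) (X Y : Matrix (Fin n) (Fin n) ℂ) :
    ‖(X * Y).trace‖ ≤
      Real.sqrt (∑ i, ∑ j, ‖X i j‖^2) * Real.sqrt (∑ i, ∑ j, ‖Y i j‖^2) := by
  have htr : (X * Y).trace = ∑ p : Fin n × Fin n, X p.1 p.2 * Y p.2 p.1 := by
    rw [Matrix.trace]
    simp only [Matrix.diag, Matrix.mul_apply]
    rw [← Finset.sum_product']
    rfl
  have h1 : ‖(X * Y).trace‖ ≤ ∑ p : Fin n × Fin n, ‖X p.1 p.2‖ * ‖Y p.2 p.1‖ := by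
    rw [htr]
    refine (norm_sum_le _ _).trans_eq ?_
    simp [norm_mul]
  have h2 : (∑ p : Fin n × Fin n, ‖X p.1 p.2‖ * ‖Y p.2 p.1‖)^2 ≤
      (∑ p : Fin n × Fin n, ‖X p.1 p.2‖^2) * ∑ p : Fin n × Fin n, ‖Y p.2 p.1‖^2 :=
    Finset.sum_mul_sq_le_sq_mul_sq _ _ _
  have hX : (∑ p : Fin n × Fin n, ‖X p.1 p.2‖^2) = ∑ i, ∑ j, ‖X i j‖^2 := by
    rw [← Finset.sum_product']; rfl
  have hY : (∑ p : Fin n × Fin n, ‖Y p.2 p.1‖^2) = ∑ i, ∑ j, ‖Y i j‖^2 := by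
    have : (∑ p : Fin n × Fin n, ‖Y p.2 p.1‖^2) = ∑ i, ∑ j, ‖Y j i‖^2 := by
      rw [← Finset.sum_product']; rfl
    rw [this, Finset.sum_comm]
  have h3 : ∑ p : Fin n × Fin n, ‖X p.1 p.2‖ * ‖Y p.2 p.1‖ ≤
      Real.sqrt (∑ i, ∑ j, ‖X i j‖^2) * Real.sqrt (∑ i, ∑ j, ‖Y i j‖^2) := by
    rw [← Real.sqrt_mul (by positivity)]
    rw [show (∑ p : Fin n × Fin n, ‖X p.1 p.2‖ * ‖Y p.2 p.1‖) =
      Real.sqrt ((∑ p : Fin n × Fin n, ‖X p.1 p.2‖ * ‖Y p.2 p.1‖)^2) from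
      (Real.sqrt_sq (by positivity)).symm]
    apply Real.sqrt_le_sqrt
    rw [hX, hY] at h2
    exact h2
  exact h1.trans h3

private lemma aux_tele {R : Type*} [Ring R] (a b : R) :
    ∀ s : ℕ, a^s - b^s = ∑ k ∈ Finset.range s, a^k * (a-b) * b^(s-1-k)
  | 0 => by simp
  | (s+1) => by
    have ih := aux_tele a b s
    calc a^(s+1) - b^(s+1) = a * (a^s - b^s) + (a - b) * b^s := by
          rw [pow_succ' a s, pow_succ' b s]; noncomm_ring
      _ = (∑ k ∈ Finset.range s, a * (a^k * (a-b) * b^(s-1-k))) + (a - b) * b^s := by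
          rw [ih, Finset.mul_sum]
      _ = ∑ k ∈ Finset.range (s+1), a^k * (a-b) * b^(s+1-1-k) := by
          rw [Finset.sum_range_succ']
          congr 1
          · refine Finset.sum_congr rfl fun k hk => ?_
            have he : s + 1 - 1 - (k + 1) = s - 1 - k := by omega
            rw [he, pow_succ']
            noncomm_ring
          · simp

private lemma aux_clm_pow {E : Type*} [NormedAddCommGroup E] [NormedSpace ℂ E]
    (f : E →L[ℂ] E) : ∀ k : ℕ, ‖f ^ k‖ ≤ ‖f‖ ^ k
  | 0 => by
    rw [pow_zero, pow_zero]
    exact (ContinuousLinearMap.norm_id_le).trans_eq rfl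
  | (k+1) => by
    rw [pow_succ, pow_succ]
    exact (norm_mul_le _ _).trans
      (mul_le_mul_of_nonneg_right (aux_clm_pow f k) (norm_nonneg f))

theorem asymptotically_equivalent_matrices_have_equal_moments
    (A B : (n : ℕ) → Matrix (Fin n) (Fin n) ℂ)
    -- uniformly bounded operator norms
    (hA : ∃ C : ℝ, ∀ n, ‖Matrix.toEuclideanCLM (𝕜 := ℂ) (A n)‖ ≤ C)
    (hB : ∃ C : ℝ, ∀ n, ‖Matrix.toEuclideanCLM (𝕜 := ℂ) (B n)‖ ≤ C)
    -- normalized Frobenius distance tends to zero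
    (hF : Tendsto (fun n : ℕ => (1 / (n : ℝ)) * ∑ i, ∑ j, ‖(A n - B n) i j‖ ^ 2)
      atTop (nhds 0)) :
    ∀ s : ℕ,
      Tendsto (fun n : ℕ => ((n : ℂ))⁻¹ * ((A n ^ s).trace - (B n ^ s).trace))
        atTop (nhds 0) ∧
      ∀ L : ℂ,
        Tendsto (fun n : ℕ => ((n : ℂ))⁻¹ * (A n ^ s).trace) atTop (nhds L) ↔
        Tendsto (fun n : ℕ => ((n : ℂ))⁻¹ * (B n ^ s).trace) atTop (nhds L) := by
  obtain ⟨CA, hCA⟩ := hA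
  obtain ⟨CB, hCB⟩ := hB
  set C : ℝ := max (max CA CB) 1 with hCdef
  have hC1 : (1:ℝ) ≤ C := le_max_right _ _
  have hC0 : (0:ℝ) ≤ C := zero_le_one.trans hC1
  have hCA' : ∀ n, ‖Matrix.toEuclideanCLM (𝕜 := ℂ) (A n)‖ ≤ C :=
    fun n => (hCA n).trans ((le_max_left _ _).trans (le_max_left _ _))
  have hCB' : ∀ n, ‖Matrix.toEuclideanCLM (𝕜 := ℂ) (B n)‖ ≤ C :=
    fun n => (hCB n).trans ((le_max_right _ _).trans (le_max_left _ _))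
  intro s
  set F : ℕ → ℝ := fun n => ∑ i, ∑ j, ‖(A n - B n) i j‖ ^ 2 with hFdef
  have hFnn : ∀ n, 0 ≤ F n := fun n => by positivity
  -- the key pointwise bound
  have key : ∀ n : ℕ, ‖((n : ℂ))⁻¹ * ((A n ^ s).trace - (B n ^ s).trace)‖ ≤
      (s * C ^ s) * Real.sqrt ((1 / (n : ℝ)) * F n) := by
    intro n
    rcases Nat.eq_zero_or_pos n with hn | hn
    · subst hn
      simp
    have hnR : (0:ℝ) < (n : ℝ) := by exact_mod_cast hn
    -- bound each telescoping term
    have hterm : ∀ k ∈ Finset.range s,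
        ‖((A n) ^ k * (A n - B n) * (B n) ^ (s-1-k)).trace‖ ≤
          Real.sqrt n * C ^ s * Real.sqrt (F n) := by
      intro k hk
      have hk' : k < s := Finset.mem_range.mp hk
      set M : Matrix (Fin n) (Fin n) ℂ := (B n) ^ (s-1-k) * (A n) ^ k with hM
      have hcyc : ((A n) ^ k * (A n - B n) * (B n) ^ (s-1-k)).trace =
          (M * (A n - B n)).trace := by
        rw [Matrix.trace_mul_cycle, hM, mul_assoc]
      rw [hcyc]
      have hcs := aux_trace_cs n M (A n - B n)
      have hfM : ∑ i, ∑ j, ‖M i j‖ ^ 2 ≤ n * ‖Matrix.toEuclideanCLM (𝕜 := ℂ) M‖ ^ 2 :=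
        aux_frob n M
      have hMnorm : ‖Matrix.toEuclideanCLM (𝕜 := ℂ) M‖ ≤ C ^ s := by
        have : Matrix.toEuclideanCLM (𝕜 := ℂ) M =
            (Matrix.toEuclideanCLM (𝕜 := ℂ) (B n)) ^ (s-1-k) *
            (Matrix.toEuclideanCLM (𝕜 := ℂ) (A n)) ^ k := by
          rw [hM, map_mul, map_pow, map_pow]
        rw [this]
        calc ‖(Matrix.toEuclideanCLM (𝕜 := ℂ) (B n)) ^ (s-1-k) *
              (Matrix.toEuclideanCLM (𝕜 := ℂ) (A n)) ^ k‖
            ≤ ‖(Matrix.toEuclideanCLM (𝕜 := ℂ) (B n)) ^ (s-1-k)‖ *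
              ‖(Matrix.toEuclideanCLM (𝕜 := ℂ) (A n)) ^ k‖ := norm_mul_le _ _
          _ ≤ ‖Matrix.toEuclideanCLM (𝕜 := ℂ) (B n)‖ ^ (s-1-k) *
              ‖Matrix.toEuclideanCLM (𝕜 := ℂ) (A n)‖ ^ k :=
              mul_le_mul (aux_clm_pow _ _) (aux_clm_pow _ _) (norm_nonneg _) (by positivity)
          _ ≤ C ^ (s-1-k) * C ^ k :=
              mul_le_mul (pow_le_pow_left₀ (norm_nonneg _) (hCB' n) _)
                (pow_le_pow_left₀ (norm_nonneg _) (hCA' n) _) (by positivity) (by positivity)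
          _ = C ^ ((s-1-k) + k) := (pow_add C _ _).symm
          _ ≤ C ^ s := pow_le_pow_right₀ hC1 (by omega)
      have hsqM : Real.sqrt (∑ i, ∑ j, ‖M i j‖ ^ 2) ≤ Real.sqrt n * C ^ s := by
        calc Real.sqrt (∑ i, ∑ j, ‖M i j‖ ^ 2)
            ≤ Real.sqrt ((n : ℝ) * (C ^ s) ^ 2) := by
              apply Real.sqrt_le_sqrt
              refine hfM.trans ?_
              exact mul_le_mul_of_nonneg_left
                (pow_le_pow_left₀ (norm_nonneg _) hMnorm 2) hnR.le
          _ = Real.sqrt n * C ^ s := by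
              rw [Real.sqrt_mul (le_of_lt hnR), Real.sqrt_sq (by positivity)]
      calc ‖(M * (A n - B n)).trace‖
          ≤ Real.sqrt (∑ i, ∑ j, ‖M i j‖ ^ 2) * Real.sqrt (F n) := hcs
        _ ≤ Real.sqrt n * C ^ s * Real.sqrt (F n) := by
            gcongr
    -- sum the bounds
    have hsum : ‖((A n ^ s).trace - (B n ^ s).trace)‖ ≤
        s * (Real.sqrt n * C ^ s * Real.sqrt (F n)) := by
      have hts : (A n ^ s).trace - (B n ^ s).trace =
          ∑ k ∈ Finset.range s, ((A n) ^ k * (A n - B n) * (B n) ^ (s-1-k)).trace := by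
        rw [← Matrix.trace_sub, aux_tele (A n) (B n) s, Matrix.trace_sum]
      rw [hts]
      calc ‖∑ k ∈ Finset.range s, ((A n) ^ k * (A n - B n) * (B n) ^ (s-1-k)).trace‖
          ≤ ∑ k ∈ Finset.range s, ‖((A n) ^ k * (A n - B n) * (B n) ^ (s-1-k)).trace‖ :=
            norm_sum_le _ _
        _ ≤ ∑ _k ∈ Finset.range s, Real.sqrt n * C ^ s * Real.sqrt (F n) :=
            Finset.sum_le_sum hterm
        _ = s * (Real.sqrt n * C ^ s * Real.sqrt (F n)) := by
            rw [Finset.sum_const, Finset.card_range, nsmul_eq_mul]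
    have hninv : ‖((n : ℂ))⁻¹‖ = ((n : ℝ))⁻¹ := by
      rw [norm_inv, Complex.norm_natCast]
    rw [norm_mul, hninv]
    have hrw : ((n:ℝ))⁻¹ * (s * (Real.sqrt n * C ^ s * Real.sqrt (F n))) =
        (s * C ^ s) * Real.sqrt ((1 / (n : ℝ)) * F n) := by
      rw [Real.sqrt_mul (by positivity), one_div, Real.sqrt_inv]
      have h1 : Real.sqrt n * Real.sqrt n = (n:ℝ) := Real.mul_self_sqrt (le_of_lt hnR)
      have h2 : Real.sqrt n ≠ 0 := by positivity
      rw [← h1, mul_inv]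
      field_simp
      have h3 : Real.sqrt n ^ 2 = (n:ℝ) := Real.sq_sqrt hnR.le
      rw [h3, h3]; ring
    calc ((n:ℝ))⁻¹ * ‖((A n ^ s).trace - (B n ^ s).trace)‖
        ≤ ((n:ℝ))⁻¹ * (s * (Real.sqrt n * C ^ s * Real.sqrt (F n))) := by
          gcongr
      _ = (s * C ^ s) * Real.sqrt ((1 / (n : ℝ)) * F n) := hrw
  -- the RHS tends to zero
  have hbound : Tendsto (fun n : ℕ => (s * C ^ s) * Real.sqrt ((1 / (n : ℝ)) * F n))
      atTop (nhds 0) := by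
    have hsqrt : Tendsto (fun n : ℕ => Real.sqrt ((1 / (n : ℝ)) * F n)) atTop (nhds 0) := by
      have h2 := (Real.continuous_sqrt.tendsto 0).comp hF
      simp only [Function.comp_def, Real.sqrt_zero] at h2
      exact h2
    have := hsqrt.const_mul (s * C ^ s)
    simpa using this
  have h0 : Tendsto (fun n : ℕ => ((n : ℂ))⁻¹ * ((A n ^ s).trace - (B n ^ s).trace))
      atTop (nhds 0) := squeeze_zero_norm key hbound
  refine ⟨h0, fun L => ⟨fun hL => ?_, fun hL => ?_⟩⟩
  · have heq : (fun n : ℕ => ((n : ℂ))⁻¹ * (B n ^ s).trace) =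
        fun n : ℕ => ((n : ℂ))⁻¹ * (A n ^ s).trace -
          ((n : ℂ))⁻¹ * ((A n ^ s).trace - (B n ^ s).trace) := by
      funext n; ring
    rw [heq]
    simpa using hL.sub h0
  · have heq : (fun n : ℕ => ((n : ℂ))⁻¹ * (A n ^ s).trace) =
        fun n : ℕ => ((n : ℂ))⁻¹ * (B n ^ s).trace +
          ((n : ℂ))⁻¹ * ((A n ^ s).trace - (B n ^ s).trace) := by
      funext n; ring
    rw [heq]
    simpa using hL.add h0
end

section
/- Let f be a banded Toeplitz symbol of bandwidth m. Then for every n ≥ 1, every eigenvalue of the finite Toeplitz matrix T_n(f) lies in the convex hull of the range of the symbol on the unit circle, i.e., σ(T_n(f)) ⊆ conv{f(e^{iθ}) : θ ∈ [0, 2π)}. -/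
open Complex Polynomial
open scoped Real

/-- The finite Toeplitz matrix `T_n(f)` with (i,j)-entry `a_{i-j}`. -/
noncomputable def toepMat (n : ℕ) (a : ℤ → ℂ) : Matrix (Fin n) (Fin n) ℂ :=
  Matrix.of fun i j => a ((i : ℤ) - (j : ℤ))

/-- `exp(2πi/N)^d = 1 ↔ N ∣ d`. -/
lemma zeta_zpow_eq_one_iff (N : ℕ) (hN : 0 < N) (d : ℤ) :
    (Complex.exp (2 * Real.pi * Complex.I / N)) ^ d = 1 ↔ (N : ℤ) ∣ d := by
  rw [← Complex.exp_int_mul, Complex.exp_eq_one_iff]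
  constructor
  · rintro ⟨k, hk⟩
    refine ⟨k, ?_⟩
    have hNne : (N : ℂ) ≠ 0 := Nat.cast_ne_zero.2 hN.ne'
    have h2 : (2 * Real.pi * Complex.I : ℂ) ≠ 0 := by
      simp [Real.pi_ne_zero, Complex.I_ne_zero]
    field_simp at hk
    have : (d : ℂ) = (k * N : ℤ) := by
      push_cast
      exact mul_right_cancel₀ h2 (by linear_combination (2 * Real.pi * Complex.I) * hk)
    rw [mul_comm]; exact_mod_cast this
  · rintro ⟨k, rfl⟩
    refine ⟨k, ?_⟩
    have hNne : (N : ℂ) ≠ 0 := Nat.cast_ne_zero.2 hN.ne'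
    field_simp
    push_cast
    ring

/-- Discrete orthogonality of characters. -/
lemma zeta_sum_zpow (N : ℕ) (hN : 0 < N) (d : ℤ) :
    ∑ t ∈ Finset.range N, (Complex.exp (2 * Real.pi * Complex.I / N)) ^ (d * (t : ℤ))
      = if (N : ℤ) ∣ d then (N : ℂ) else 0 := by
  set ζ : ℂ := Complex.exp (2 * Real.pi * Complex.I / N) with hζdef
  have hrw : ∀ t ∈ Finset.range N, ζ ^ (d * (t : ℤ)) = (ζ ^ d) ^ (t : ℕ) := by
    intro t _
    rw [zpow_mul, zpow_natCast]
  rw [Finset.sum_congr rfl hrw]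
  by_cases hdvd : (N : ℤ) ∣ d
  · have h1 : ζ ^ d = 1 := (zeta_zpow_eq_one_iff N hN d).2 hdvd
    simp [h1, hdvd]
  · have h1 : ζ ^ d ≠ 1 := fun h => hdvd ((zeta_zpow_eq_one_iff N hN d).1 h)
    rw [geom_sum_eq h1, if_neg hdvd]
    have hpow : (ζ ^ d) ^ N = 1 := by
      rw [← zpow_natCast (ζ ^ d), ← zpow_mul, mul_comm]
      exact (zeta_zpow_eq_one_iff N hN _).2 ⟨d, rfl⟩
    rw [hpow, sub_self, zero_div]

/-- The crucial character-sum evaluation, with a coefficient. -/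
lemma zeta_sum_small (N : ℕ) (hN : 0 < N) (c : ℂ) (d : ℤ) (hd : |d| < (N : ℤ)) :
    ∑ t ∈ Finset.range N, c * (Complex.exp (2 * Real.pi * Complex.I / N)) ^ (d * (t : ℤ))
      = if d = 0 then c * (N : ℂ) else 0 := by
  rw [← Finset.mul_sum, zeta_sum_zpow N hN]
  by_cases h0 : d = 0
  · subst h0; simp
  · have : ¬ (N : ℤ) ∣ d := fun h => h0 (Int.eq_zero_of_abs_lt_dvd h hd)
    simp [this, h0]

/-- Expand a triple product of sums. -/
lemma sum_mul_sum_mul_sum {α β γ : Type*} (s1 : Finset α) (s2 : Finset β) (s3 : Finset γ)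
    (f : α → ℂ) (g : β → ℂ) (h : γ → ℂ) :
    (∑ a ∈ s1, f a) * ((∑ b ∈ s2, g b) * (∑ c ∈ s3, h c))
      = ∑ a ∈ s1, ∑ b ∈ s2, ∑ c ∈ s3, f a * (g b * h c) := by
  rw [Finset.sum_mul_sum, Finset.sum_mul_sum]
  refine Finset.sum_congr rfl fun a _ => Finset.sum_congr rfl fun b _ => ?_
  rw [Finset.mul_sum]

theorem eigenvalues_in_convex_hull_of_symbol_range
    (m : ℕ) (hm : 0 < m) (a : ℤ → ℂ)
    (ham : a (m : ℤ) ≠ 0) (hamneg : a (-(m : ℤ)) ≠ 0)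
    (hband : ∀ k : ℤ, (m : ℤ) < |k| → a k = 0)
    (n : ℕ) (hn : 1 ≤ n) :
    spectrum ℂ (toepMat n a) ⊆
      convexHull ℝ
        ((fun θ : ℝ => symb m a (Complex.exp (θ * Complex.I))) '' Set.Ico 0 (2 * Real.pi)) := by
  intro lam hlam
  -- extract an eigenvector
  rw [← AlgEquiv.spectrum_eq (Matrix.toLinAlgEquiv' (n := Fin n) (R := ℂ)),
    ← Module.End.hasEigenvalue_iff_mem_spectrum] at hlam
  obtain ⟨x, hx1, hx0⟩ := hlam.exists_hasEigenvector
  have heig : ∀ i : Fin n, (∑ j : Fin n, a ((i : ℤ) - (j : ℤ)) * x j) = lam * x i := by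
    have h1 := (Module.End.mem_eigenspace_iff).1 hx1
    rw [Matrix.toLinAlgEquiv'_apply] at h1
    intro i
    have hi := congrFun h1 i
    simpa [toepMat, Matrix.mulVec, dotProduct] using hi
  -- set up roots of unity
  set N : ℕ := m + n with hNdef
  have hN : 0 < N := Nat.lt_of_lt_of_le hm (Nat.le_add_right m n)
  set ζ : ℂ := Complex.exp (2 * Real.pi * Complex.I / N) with hζdef
  have hζ : ζ ≠ 0 := Complex.exp_ne_zero _
  have hE : ∀ c d : ℤ, ζ ^ (c + d) = ζ ^ c * ζ ^ d := fun c d => zpow_add₀ hζ c d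
  have hEconj : ∀ d : ℤ, (starRingEnd ℂ) (ζ ^ d) = ζ ^ (-d) := by
    intro d
    rw [map_zpow₀, hζdef, ← Complex.exp_conj]
    have harg : (2 * Real.pi * Complex.I / N : ℂ) = ((2 * Real.pi / N : ℝ) : ℂ) * Complex.I := by
      push_cast; ring
    rw [harg, map_mul, Complex.conj_ofReal, Complex.conj_I, mul_neg, Complex.exp_neg,
      inv_zpow, ← zpow_neg]
  -- the evaluation points
  have hpoint : ∀ t : ℕ, Complex.exp ((2 * Real.pi * t / N : ℝ) * Complex.I) = ζ ^ (t : ℤ) := by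
    intro t
    rw [zpow_natCast, hζdef, ← Complex.exp_nat_mul]
    congr 1
    push_cast
    ring
  -- symbol at ζ^t
  have hsymb : ∀ t : ℕ, symb m a (ζ ^ (t : ℤ)) =
      ∑ k ∈ Finset.Icc (-(m : ℤ)) (m : ℤ), a k * ζ ^ (-k * (t : ℤ)) := by
    intro t
    unfold symb
    refine Finset.sum_congr rfl fun k _ => ?_
    rw [← zpow_mul]
    ring_nf
  -- weights
  set q : ℕ → ℂ := fun t => ∑ j : Fin n, x j * ζ ^ (-(j : ℤ) * (t : ℤ)) with hqdef
  set w : ℕ → ℝ := fun t => Complex.normSq (q t) with hwdef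
  have hqconj : ∀ t : ℕ, (starRingEnd ℂ) (q t)
      = ∑ i : Fin n, (starRingEnd ℂ) (x i) * ζ ^ ((i : ℤ) * (t : ℤ)) := by
    intro t
    rw [hqdef]
    simp only [map_sum, map_mul, hEconj]
    refine Finset.sum_congr rfl fun i _ => ?_
    congr 1
    ring_nf
  have hwC : ∀ t : ℕ, (w t : ℂ) = (starRingEnd ℂ) (q t) * q t := by
    intro t
    rw [hwdef, mul_comm]
    exact (Complex.mul_conj (q t)).symm
  -- bound on index differences
  have habs : ∀ (i j : Fin n) (k : ℤ), k ∈ Finset.Icc (-(m : ℤ)) (m : ℤ) →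
      |(i : ℤ) - (j : ℤ) - k| < (N : ℤ) := by
    intro i j k hk
    have hj : (j : ℤ) < n := by exact_mod_cast j.2
    have hi' : (i : ℤ) < n := by exact_mod_cast i.2
    have h1 : (0 : ℤ) ≤ i := Int.natCast_nonneg _
    have h2 : (0 : ℤ) ≤ j := Int.natCast_nonneg _
    obtain ⟨hk1, hk2⟩ := Finset.mem_Icc.1 hk
    have hNeq : (N : ℤ) = (m : ℤ) + (n : ℤ) := by rw [hNdef]; push_cast; ring
    rw [abs_lt]
    omega
  have habs0 : ∀ (i j : Fin n), |(i : ℤ) - (j : ℤ)| < (N : ℤ) := by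
    intro i j
    have := habs i j 0 (Finset.mem_Icc.2 ⟨by omega, by omega⟩)
    simpa using this
  -- Sum identity S2: total weight
  have hS2 : (∑ t ∈ Finset.range N, (w t : ℂ))
      = (N : ℂ) * ∑ i : Fin n, (starRingEnd ℂ) (x i) * x i := by
    have expand : ∀ t ∈ Finset.range N, (w t : ℂ) =
        ∑ i : Fin n, ∑ j : Fin n,
          ((starRingEnd ℂ) (x i) * x j) * ζ ^ (((i : ℤ) - (j : ℤ)) * (t : ℤ)) := by
      intro t _
      rw [hwC t, hqconj t, hqdef, Finset.sum_mul_sum]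
      refine Finset.sum_congr rfl fun i _ => Finset.sum_congr rfl fun j _ => ?_
      rw [show ((i : ℤ) - (j : ℤ)) * (t : ℤ)
            = ((i : ℤ) * t) + (-(j : ℤ) * t) by ring, hE]
      ring
    rw [Finset.sum_congr rfl expand, Finset.sum_comm]
    rw [Finset.mul_sum]
    refine Finset.sum_congr rfl fun i _ => ?_
    rw [Finset.sum_comm]
    have inner : ∀ j : Fin n, ∑ t ∈ Finset.range N,
        ((starRingEnd ℂ) (x i) * x j) * ζ ^ (((i : ℤ) - (j : ℤ)) * (t : ℤ))
        = if ((i : ℤ) - (j : ℤ) = 0) then ((starRingEnd ℂ) (x i) * x j) * (N : ℂ) else 0 := by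
      intro j
      exact zeta_sum_small N hN _ _ (habs0 i j)
    rw [Finset.sum_congr rfl fun j _ => inner j]
    have cond : ∀ j : Fin n, ((i : ℤ) - (j : ℤ) = 0) ↔ (j = i) := by
      intro j
      rw [sub_eq_zero]
      constructor
      · intro h; exact Fin.ext (by exact_mod_cast h.symm)
      · rintro rfl; rfl
    rw [Finset.sum_congr rfl fun j _ =>
      if_congr (cond j) rfl rfl]
    rw [Finset.sum_ite_eq' Finset.univ i (fun j => ((starRingEnd ℂ) (x i) * x j) * (N : ℂ))]
    simp [mul_comm]
  -- Sum identity S1: weighted symbol values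
  have hS1 : (∑ t ∈ Finset.range N, (w t : ℂ) * symb m a (ζ ^ (t : ℤ)))
      = (N : ℂ) * (lam * ∑ i : Fin n, (starRingEnd ℂ) (x i) * x i) := by
    have expand : ∀ t ∈ Finset.range N, (w t : ℂ) * symb m a (ζ ^ (t : ℤ)) =
        ∑ k ∈ Finset.Icc (-(m : ℤ)) (m : ℤ), ∑ i : Fin n, ∑ j : Fin n,
          (a k * ((starRingEnd ℂ) (x i) * x j)) * ζ ^ (((i : ℤ) - (j : ℤ) - k) * (t : ℤ)) := by
      intro t _
      rw [mul_comm, hwC t, hqconj t, hqdef, hsymb t, sum_mul_sum_mul_sum]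
      refine Finset.sum_congr rfl fun k _ => Finset.sum_congr rfl fun i _ =>
        Finset.sum_congr rfl fun j _ => ?_
      rw [show ((i : ℤ) - (j : ℤ) - k) * (t : ℤ)
            = (-k * t) + (((i : ℤ) * t) + (-(j : ℤ) * t)) by ring, hE, hE]
      ring
    rw [Finset.sum_congr rfl expand, Finset.sum_comm]
    have step : ∀ k ∈ Finset.Icc (-(m : ℤ)) (m : ℤ),
        (∑ t ∈ Finset.range N, ∑ i : Fin n, ∑ j : Fin n,
          (a k * ((starRingEnd ℂ) (x i) * x j)) * ζ ^ (((i : ℤ) - (j : ℤ) - k) * (t : ℤ)))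
        = ∑ i : Fin n, ∑ j : Fin n,
            if ((i : ℤ) - (j : ℤ) - k = 0)
              then (a k * ((starRingEnd ℂ) (x i) * x j)) * (N : ℂ) else 0 := by
      intro k hk
      rw [Finset.sum_comm]
      refine Finset.sum_congr rfl fun i _ => ?_
      rw [Finset.sum_comm]
      refine Finset.sum_congr rfl fun j _ => ?_
      exact zeta_sum_small N hN _ _ (habs i j k hk)
    rw [Finset.sum_congr rfl step, Finset.sum_comm]
    have step2 : ∀ i : Fin n,
        (∑ k ∈ Finset.Icc (-(m : ℤ)) (m : ℤ), ∑ j : Fin n,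
          if ((i : ℤ) - (j : ℤ) - k = 0)
            then (a k * ((starRingEnd ℂ) (x i) * x j)) * (N : ℂ) else 0)
        = (N : ℂ) * ((starRingEnd ℂ) (x i) * (lam * x i)) := by
      intro i
      rw [Finset.sum_comm]
      have inner : ∀ j : Fin n,
          (∑ k ∈ Finset.Icc (-(m : ℤ)) (m : ℤ),
            if ((i : ℤ) - (j : ℤ) - k = 0)
              then (a k * ((starRingEnd ℂ) (x i) * x j)) * (N : ℂ) else 0)
          = (a ((i : ℤ) - (j : ℤ)) * ((starRingEnd ℂ) (x i) * x j)) * (N : ℂ) := by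
        intro j
        have cond : ∀ k : ℤ, ((i : ℤ) - (j : ℤ) - k = 0) ↔ (k = (i : ℤ) - (j : ℤ)) := by
          intro k; omega
        rw [Finset.sum_congr rfl fun k _ => if_congr (cond k) rfl rfl]
        rw [Finset.sum_ite_eq' (Finset.Icc (-(m : ℤ)) (m : ℤ)) ((i : ℤ) - (j : ℤ))
          (fun k => (a k * ((starRingEnd ℂ) (x i) * x j)) * (N : ℂ))]
        by_cases hmem : ((i : ℤ) - (j : ℤ)) ∈ Finset.Icc (-(m : ℤ)) (m : ℤ)
        · rw [if_pos hmem]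
        · rw [if_neg hmem]
          have : a ((i : ℤ) - (j : ℤ)) = 0 := by
            apply hband
            rw [Finset.mem_Icc] at hmem
            rw [lt_abs]
            omega
          rw [this]
          ring
      rw [Finset.sum_congr rfl fun j _ => inner j]
      have : ∑ j : Fin n, (a ((i : ℤ) - (j : ℤ)) * ((starRingEnd ℂ) (x i) * x j)) * (N : ℂ)
          = ((starRingEnd ℂ) (x i) * ∑ j : Fin n, a ((i : ℤ) - (j : ℤ)) * x j) * (N : ℂ) := by
        rw [Finset.mul_sum, Finset.sum_mul]
        refine Finset.sum_congr rfl fun j _ => by ring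
      rw [this, heig i]
      ring
    rw [Finset.sum_congr rfl fun i _ => step2 i]
    simp only [Finset.mul_sum]
    exact Finset.sum_congr rfl fun i _ => by ring
  -- total weight is positive
  set Sr : ℝ := ∑ i : Fin n, Complex.normSq (x i) with hSr
  have hSc : (∑ i : Fin n, (starRingEnd ℂ) (x i) * x i) = (Sr : ℂ) := by
    rw [hSr]
    push_cast
    exact Finset.sum_congr rfl fun i _ => by rw [mul_comm, Complex.mul_conj]
  have hSrpos : 0 < Sr := by
    rw [hSr]
    have : ∃ i, x i ≠ 0 := by
      by_contra h; push_neg at h; exact hx0 (funext h)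
    obtain ⟨i, hi⟩ := this
    exact Finset.sum_pos' (fun j _ => Complex.normSq_nonneg _)
      ⟨i, Finset.mem_univ i, Complex.normSq_pos.2 hi⟩
  have hwsum : (∑ t ∈ Finset.range N, w t) = N * Sr := by
    have h1 : ((∑ t ∈ Finset.range N, w t : ℝ) : ℂ) = ((N * Sr : ℝ) : ℂ) := by
      calc ((∑ t ∈ Finset.range N, w t : ℝ) : ℂ)
          = ∑ t ∈ Finset.range N, (w t : ℂ) := by push_cast; rfl
        _ = (N : ℂ) * ∑ i : Fin n, (starRingEnd ℂ) (x i) * x i := hS2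
        _ = ((N * Sr : ℝ) : ℂ) := by rw [hSc]; push_cast; ring
    exact_mod_cast h1
  have hwpos : 0 < ∑ t ∈ Finset.range N, w t := by
    rw [hwsum]
    have : (0 : ℝ) < (N : ℝ) := by exact_mod_cast hN
    positivity
  -- the evaluation points lie in the image set
  set z : ℕ → ℂ := fun t =>
    symb m a (Complex.exp (((2 * Real.pi * t / N : ℝ) : ℂ) * Complex.I)) with hzdef
  have hzmem : ∀ t ∈ Finset.range N, z t ∈
      (fun θ : ℝ => symb m a (Complex.exp (θ * Complex.I))) '' Set.Ico 0 (2 * Real.pi) := by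
    intro t ht
    refine ⟨2 * Real.pi * t / N, ⟨by positivity, ?_⟩, rfl⟩
    rw [div_lt_iff₀ (by exact_mod_cast hN)]
    have htN : (t : ℝ) < N := by exact_mod_cast Finset.mem_range.1 ht
    nlinarith [Real.pi_pos]
  -- lam is the center of mass
  have hcm : (Finset.range N).centerMass w z = lam := by
    rw [Finset.centerMass]
    have hterm : ∀ t ∈ Finset.range N, w t • z t = (w t : ℂ) * symb m a (ζ ^ (t : ℤ)) := by
      intro t _
      rw [hzdef]
      simp only []
      rw [hpoint t, Complex.real_smul]
    have hsum : (∑ t ∈ Finset.range N, w t • z t) = (∑ t ∈ Finset.range N, w t) • lam := by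
      rw [Finset.sum_congr rfl hterm, hS1, hSc, Complex.real_smul, hwsum]
      push_cast
      ring
    rw [hsum, smul_smul, inv_mul_cancel₀ hwpos.ne', one_smul]
  rw [← hcm]
  exact Finset.centerMass_mem_convexHull _ (fun t _ => Complex.normSq_nonneg _) hwpos hzmem
end
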